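/- Probabilistic modus ponens bound: for formulas P and Q, if μ(P) ≥ k and μ(P → Q) ≥ k with k ∈ (0,1], then μ(Q) ≥ (k − (1 − μ(P)))/μ(P) whenever μ(P) > 0; in particular, using the product rule μ(P→Q) = 1 − μ(P)(1−μ(Q)), μ(P) ≥ k and μ(P→Q) ≥ k imply μ(Q) ≥ 1 − (1−k)/k. -/
import Mathlib


/-- Propositional formulas built from atoms via ¬, ∨, →. -/
inductive Formula (A : Type) : Type
  | atom : A → Formula A
  | neg  : Formula A → Formula A
  | orr  : Formula A → Formula A → Formula A
  | imp  : Formula A → Formula A → Formula A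
deriving DecidableEq

/-- Well-formed sequences over a collection `V` of truth valuations. -/
inductive WFS (V : Type) : Type
  | leaf : V → WFS V
  | pair : WFS V → WFS V → WFS V
deriving DecidableEq

/-- Association between a WFS and a formula. -/
def Assoc {V A : Type} : WFS V → Formula A → Prop
  | WFS.leaf _, Formula.atom _ => True
  | s, Formula.neg β => Assoc s β
  | WFS.pair s₁ s₂, Formula.orr α β => Assoc s₁ α ∧ Assoc s₂ β
  | WFS.pair s₁ s₂, Formula.imp α β => Assoc s₁ α ∧ Assoc s₂ β
  | _, _ => False

/-- Justification of a formula by a WFS (PML semantics). -/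
def Justif {V A : Type} (val : V → A → Bool) : WFS V → Formula A → Prop
  | WFS.leaf v, Formula.atom a => val v a = true
  | s, Formula.neg β => ¬ Justif val s β
  | WFS.pair s₁ s₂, Formula.orr α β => Justif val s₁ α ∨ Justif val s₂ β
  | WFS.pair s₁ s₂, Formula.imp α β => ¬ Justif val s₁ α ∨ Justif val s₂ β
  | _, _ => False

/-- Multiplicative weight allotment extending a basic weight distribution. -/
def weight {V : Type} (pbar : V → ℝ) : WFS V → ℝ
  | WFS.leaf v => pbar v
  | WFS.pair s₁ s₂ => weight pbar s₁ * weight pbar s₂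

/-- The (finite) set of WFS associated to a formula. -/
def assocSeqs {V A : Type} [Fintype V] [DecidableEq V] : Formula A → Finset (WFS V)
  | Formula.atom _ => Finset.univ.image WFS.leaf
  | Formula.neg β => assocSeqs β
  | Formula.orr α β => (assocSeqs α ×ˢ assocSeqs β).image fun q => WFS.pair q.1 q.2
  | Formula.imp α β => (assocSeqs α ×ˢ assocSeqs β).image fun q => WFS.pair q.1 q.2

-- The logical measure of a formula: total weight of associated justifying sequences.
open scoped Classical in
noncomputable def mu {V A : Type} [Fintype V] [DecidableEq V]
    (pbar : V → ℝ) (val : V → A → Bool) (φ : Formula A) : ℝ :=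
  ∑ s ∈ (assocSeqs φ).filter (fun s => Justif val s φ), weight pbar s

/-- Derived conjunction: α ∧ β := ¬(¬α ∨ ¬β). -/
def Formula.conj {A : Type} (α β : Formula A) : Formula A :=
  Formula.neg (Formula.orr (Formula.neg α) (Formula.neg β))

/-- Classical Boolean semantics. -/
def evalF {A : Type} (v : A → Bool) : Formula A → Bool
  | Formula.atom a => v a
  | Formula.neg α => !(evalF v α)
  | Formula.orr α β => evalF v α || evalF v β
  | Formula.imp α β => !(evalF v α) || evalF v β

/-- Diagonal sequence: the valuation `v` at every leaf position of a formula. -/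
def diag {V A : Type} (v : V) : Formula A → WFS V
  | Formula.atom _ => WFS.leaf v
  | Formula.neg α => diag v α
  | Formula.orr α β => WFS.pair (diag v α) (diag v β)
  | Formula.imp α β => WFS.pair (diag v α) (diag v β)

/-- Number of atom occurrences in a formula. -/
def numAtoms {A : Type} : Formula A → ℕ
  | Formula.atom _ => 1
  | Formula.neg α => numAtoms α
  | Formula.orr α β => numAtoms α + numAtoms β
  | Formula.imp α β => numAtoms α + numAtoms β

open scoped Classical

lemma weight_nonneg' {V : Type} (pbar : V → ℝ) (hnn : ∀ v, 0 ≤ pbar v) :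
    ∀ s : WFS V, 0 ≤ weight pbar s
  | WFS.leaf v => hnn v
  | WFS.pair a b => mul_nonneg (weight_nonneg' pbar hnn a) (weight_nonneg' pbar hnn b)

lemma pair_inj' {V : Type} :
    Function.Injective (fun q : WFS V × WFS V => WFS.pair q.1 q.2) := by
  intro a b h
  cases a; cases b
  simp only [WFS.pair.injEq] at h
  exact Prod.ext h.1 h.2

lemma total_weight {V A : Type} [Fintype V] [DecidableEq V] (pbar : V → ℝ)
    (hsum : ∑ v, pbar v = 1) :
    ∀ φ : Formula A, ∑ s ∈ assocSeqs (V := V) φ, weight pbar s = 1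
  | Formula.atom a => by
      rw [assocSeqs, Finset.sum_image (fun x _ y _ h => WFS.leaf.inj h)]
      simpa [weight] using hsum
  | Formula.neg β => total_weight pbar hsum β
  | Formula.orr α β => by
      rw [assocSeqs, Finset.sum_image (fun x _ y _ h => pair_inj' h),
        Finset.sum_product]
      simp only [weight]
      rw [← Finset.sum_mul_sum, total_weight pbar hsum α, total_weight pbar hsum β,
        one_mul]
  | Formula.imp α β => by
      rw [assocSeqs, Finset.sum_image (fun x _ y _ h => pair_inj' h),
        Finset.sum_product]
      simp only [weight]
      rw [← Finset.sum_mul_sum, total_weight pbar hsum α, total_weight pbar hsum β,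
        one_mul]

lemma mu_nonneg' {V A : Type} [Fintype V] [DecidableEq V] (pbar : V → ℝ)
    (val : V → A → Bool) (hnn : ∀ v, 0 ≤ pbar v) (φ : Formula A) :
    0 ≤ mu pbar val φ :=
  Finset.sum_nonneg fun s _ => weight_nonneg' pbar hnn s

lemma mu_le_one' {V A : Type} [Fintype V] [DecidableEq V] (pbar : V → ℝ)
    (val : V → A → Bool) (hnn : ∀ v, 0 ≤ pbar v) (hsum : ∑ v, pbar v = 1)
    (φ : Formula A) : mu pbar val φ ≤ 1 := by
  rw [← total_weight (V := V) (A := A) pbar hsum φ]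
  exact Finset.sum_le_sum_of_subset_of_nonneg (Finset.filter_subset _ _)
    (fun s _ _ => weight_nonneg' pbar hnn s)

lemma mu_imp' {V A : Type} [Fintype V] [DecidableEq V] (pbar : V → ℝ)
    (val : V → A → Bool) (hsum : ∑ v, pbar v = 1) (P Q : Formula A) :
    mu pbar val (Formula.imp P Q)
      = 1 - mu pbar val P * (1 - mu pbar val Q) := by
  classical
  have hfilterP : ∑ s ∈ (assocSeqs (V := V) P).filter (fun s => Justif val s P),
      weight pbar s = mu pbar val P := by
    rw [mu]
  have hQsplit : (∑ s ∈ (assocSeqs (V := V) Q).filter (fun s => ¬ Justif val s Q),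
      weight pbar s) = 1 - mu pbar val Q := by
    have h := Finset.sum_filter_add_sum_filter_not (assocSeqs (V := V) Q)
      (fun s => Justif val s Q) (weight pbar)
    rw [total_weight pbar hsum Q] at h
    rw [mu]
    linarith
  rw [mu, assocSeqs]
  rw [Finset.filter_image, Finset.sum_image (fun x _ y _ h => pair_inj' h)]
  have hjust : ∀ q : WFS V × WFS V,
      Justif val (WFS.pair q.1 q.2) (Formula.imp P Q)
        ↔ ¬ (Justif val q.1 P ∧ ¬ Justif val q.2 Q) := by
    intro q
    simp only [Justif]
    tauto
  rw [Finset.filter_congr (fun q (_ : q ∈ (assocSeqs (V := V) P) ×ˢ (assocSeqs (V := V) Q)) => hjust q)]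
  have htot : ∑ q ∈ (assocSeqs (V := V) P) ×ˢ (assocSeqs (V := V) Q),
      weight pbar (WFS.pair q.1 q.2) = 1 := by
    have := total_weight (V := V) pbar hsum (Formula.imp P Q)
    rw [assocSeqs, Finset.sum_image (fun x _ y _ h => pair_inj' h)] at this
    exact this
  have hprod : ∑ q ∈ ((assocSeqs (V := V) P) ×ˢ (assocSeqs (V := V) Q)).filter
      (fun q => Justif val q.1 P ∧ ¬ Justif val q.2 Q),
      weight pbar (WFS.pair q.1 q.2)
      = mu pbar val P * (1 - mu pbar val Q) := by
    have hset : ((assocSeqs (V := V) P) ×ˢ (assocSeqs (V := V) Q)).filter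
        (fun q => Justif val q.1 P ∧ ¬ Justif val q.2 Q)
        = ((assocSeqs (V := V) P).filter (fun s => Justif val s P)) ×ˢ
          ((assocSeqs (V := V) Q).filter (fun s => ¬ Justif val s Q)) := by
      ext q
      simp only [Finset.mem_filter, Finset.mem_product]
      tauto
    rw [hset, Finset.sum_product]
    simp only [weight]
    rw [← Finset.sum_mul_sum, hfilterP, hQsplit]
  have hcompl : ∑ q ∈ ((assocSeqs (V := V) P) ×ˢ (assocSeqs (V := V) Q)).filter
      (fun q => ¬ (Justif val q.1 P ∧ ¬ Justif val q.2 Q)),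
      weight pbar (WFS.pair q.1 q.2)
      = 1 - mu pbar val P * (1 - mu pbar val Q) := by
    have h2 := Finset.sum_filter_add_sum_filter_not
      ((assocSeqs (V := V) P) ×ˢ (assocSeqs (V := V) Q))
      (fun q => Justif val q.1 P ∧ ¬ Justif val q.2 Q)
      (fun q => weight pbar (WFS.pair q.1 q.2))
    rw [htot] at h2
    rw [hprod] at h2
    linarith
  exact hcompl

/-- probabilistic modus ponens bound. -/
theorem stmt15 {V A : Type} [Fintype V] [DecidableEq V] (pbar : V → ℝ)
    (val : V → A → Bool)
    (hnn : ∀ v, 0 ≤ pbar v) (hsum : ∑ v, pbar v = 1)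
    (P Q : Formula A) (k : ℝ) (hk0 : 0 < k) (hk1 : k ≤ 1)
    (hP : k ≤ mu pbar val P) (hPQ : k ≤ mu pbar val (Formula.imp P Q)) :
    (0 < mu pbar val P →
      (k - (1 - mu pbar val P)) / mu pbar val P ≤ mu pbar val Q) ∧
    1 - (1 - k) / k ≤ mu pbar val Q := by
  set p := mu pbar val P with hp_def
  set q := mu pbar val Q with hq_def
  have himp := mu_imp' pbar val hsum P Q
  rw [himp] at hPQ
  have hq1 : q ≤ 1 := mu_le_one' pbar val hnn hsum Q
  have hpq' : p * (1 - q) ≤ 1 - k := by linarith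
  have hp0 : 0 < p := lt_of_lt_of_le hk0 hP
  constructor
  · intro hp
    rw [div_le_iff₀ hp]
    nlinarith
  · have h2 : k * (1 - q) ≤ p * (1 - q) :=
      mul_le_mul_of_nonneg_right hP (by linarith)
    have h3 : k * (1 - q) ≤ 1 - k := le_trans h2 hpq'
    have h4 : 1 - q ≤ (1 - k) / k := by
      rw [le_div_iff₀ hk0]; linarith [h3]
    linarith
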